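/- Let W be a graphon, G a finite graph with m edges containing a 4-cycle, and p ∈ [0,1]. Suppose the distribution of the number of edges in a W-sample along G equals the binomial distribution B(m, p), i.e., N(G, W) = N(G, p). Then for every 1 ≤ k ≤ m, E[t(G_k, W)] = p^k, where G_k is a uniformly random k-edge subgraph of G. -/

import Mathlib

open MeasureTheory Finset

/-- Lebesgue measure restricted to `[0,1]`. -/
noncomputable def μ01 : Measure ℝ := volume.restrict (Set.Icc 0 1)

/-- Product measure on `V → ℝ`, each coordinate uniform on `[0,1]`. -/
noncomputable def πμ (V : Type*) [Fintype V] : Measure (V → ℝ) :=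
  Measure.pi fun _ => μ01

/-- `W` is a graphon: symmetric, measurable, with values in `[0,1]`. -/
def IsGraphon (W : ℝ → ℝ → ℝ) : Prop :=
  Measurable (Function.uncurry W) ∧ (∀ x y, W x y = W y x) ∧
    ∀ x y, W x y ∈ Set.Icc (0 : ℝ) 1

/-- Value of `W` on an unordered pair of vertices (for symmetric `W` this is
just `W (x i) (x j)` on the edge `{i, j}`). -/
noncomputable def edgeVal (W : ℝ → ℝ → ℝ) {V : Type*} (x : V → ℝ) : Sym2 V → ℝ :=
  Sym2.lift ⟨fun i j => (W (x i) (x j) + W (x j) (x i)) / 2,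
    fun i j => by simp [add_comm]⟩

/-- `∏_{{i,j} ∈ s} W(x_i, x_j)` for a finite set `s` of unordered pairs. -/
noncomputable def prodEdges (W : ℝ → ℝ → ℝ) {V : Type*} (s : Finset (Sym2 V))
    (x : V → ℝ) : ℝ :=
  ∏ e ∈ s, edgeVal W x e

/-- Homomorphism density of the graph on `V` with edge set `s` in `W`. -/
noncomputable def homDensitySet {V : Type*} [Fintype V] (s : Finset (Sym2 V))
    (W : ℝ → ℝ → ℝ) : ℝ :=
  ∫ x : V → ℝ, prodEdges W s x ∂(πμ V)

/-- Homomorphism density `t(F, W)`. -/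
noncomputable def homDensity {V : Type*} [Fintype V] (F : SimpleGraph V)
    [Fintype F.edgeSet] (W : ℝ → ℝ → ℝ) : ℝ :=
  homDensitySet F.edgeFinset W

/-- `𝔾(G, W)(F)`: the probability that sampling along `G` from `W` yields the
edge-subgraph of `G` with edge set `s`. -/
noncomputable def sampleProb {V : Type*} [Fintype V] [DecidableEq V]
    (G : SimpleGraph V) [Fintype G.edgeSet] (W : ℝ → ℝ → ℝ)
    (s : Finset (Sym2 V)) : ℝ :=
  ∫ x : V → ℝ,
    (∏ e ∈ s, edgeVal W x e) * ∏ e ∈ G.edgeFinset \ s, (1 - edgeVal W x e) ∂(πμ V)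

/-- `ℕ(G, W)(k)`: probability that the `W`-sample along `G` has exactly `k` edges. -/
noncomputable def edgeCountDist {V : Type*} [Fintype V] [DecidableEq V]
    (G : SimpleGraph V) [Fintype G.edgeSet] (W : ℝ → ℝ → ℝ) (k : ℕ) : ℝ :=
  ∑ s ∈ G.edgeFinset.powerset.filter (fun s => s.card = k), sampleProb G W s

/-- `E[t(G_k, W)]` where `G_k` is a uniformly random `k`-edge subgraph of `G`. -/
noncomputable def avgSubDensity {V : Type*} [Fintype V] [DecidableEq V]
    (G : SimpleGraph V) [Fintype G.edgeSet] (W : ℝ → ℝ → ℝ) (k : ℕ) : ℝ :=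
  ((G.edgeFinset.card.choose k : ℝ))⁻¹ *
    ∑ s ∈ G.edgeFinset.powerset.filter (fun s => s.card = k), homDensitySet s W

/-- `G` contains a `4`-cycle. -/
def ContainsC4 {V : Type*} (G : SimpleGraph V) : Prop :=
  ∃ a b c d : V, a ≠ b ∧ a ≠ c ∧ a ≠ d ∧ b ≠ c ∧ b ≠ d ∧ c ≠ d ∧
    G.Adj a b ∧ G.Adj b c ∧ G.Adj c d ∧ G.Adj d a

lemma edgeVal_apply {n : ℕ} (W : ℝ → ℝ → ℝ) (x : Fin n → ℝ) (i j : Fin n) :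
    edgeVal W x s(i, j) = (W (x i) (x j) + W (x j) (x i)) / 2 := rfl

lemma measurable_edgeVal {n : ℕ} {W : ℝ → ℝ → ℝ} (hW : Measurable (Function.uncurry W))
    (e : Sym2 (Fin n)) : Measurable fun x : Fin n → ℝ => edgeVal W x e := by
  induction e using Sym2.ind with
  | _ i j =>
    simp only [edgeVal_apply]
    have h1 : Measurable fun x : Fin n → ℝ => Function.uncurry W (x i, x j) :=
      hW.comp ((measurable_pi_apply i).prodMk (measurable_pi_apply j)) 
    have h2 : Measurable fun x : Fin n → ℝ => Function.uncurry W (x j, x i) :=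
      hW.comp ((measurable_pi_apply j).prodMk (measurable_pi_apply i))
    exact (h1.add h2).div_const 2

lemma edgeVal_mem {n : ℕ} {W : ℝ → ℝ → ℝ} (hW : IsGraphon W) (x : Fin n → ℝ)
    (e : Sym2 (Fin n)) : edgeVal W x e ∈ Set.Icc (0:ℝ) 1 := by
  induction e using Sym2.ind with
  | _ i j =>
    obtain ⟨h1, h2⟩ := hW.2.2 (x i) (x j)
    obtain ⟨h3, h4⟩ := hW.2.2 (x j) (x i)
    rw [edgeVal_apply]
    constructor <;> [linarith; linarith]

instance : IsProbabilityMeasure μ01 :=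
  ⟨by rw [μ01, Measure.restrict_apply_univ, Real.volume_Icc]; norm_num⟩

instance {n : ℕ} : IsProbabilityMeasure (πμ (Fin n)) := by
  unfold πμ; infer_instance

lemma integrable_prodForm {n : ℕ} {W : ℝ → ℝ → ℝ} (hW : IsGraphon W)
    (s t : Finset (Sym2 (Fin n))) :
    Integrable (fun x : Fin n → ℝ =>
      (∏ e ∈ s, edgeVal W x e) * ∏ e ∈ t, (1 - edgeVal W x e)) (πμ (Fin n)) := by
  have hm : Measurable fun x : Fin n → ℝ =>
      (∏ e ∈ s, edgeVal W x e) * ∏ e ∈ t, (1 - edgeVal W x e) :=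
    (Finset.measurable_prod s fun e _ => measurable_edgeVal hW.1 e).mul
      (Finset.measurable_prod t fun e _ => measurable_const.sub (measurable_edgeVal hW.1 e))
  refine (integrable_const (1:ℝ)).mono' hm.aestronglyMeasurable (ae_of_all _ fun x => ?_)
  have h1 : (0:ℝ) ≤ ∏ e ∈ s, edgeVal W x e :=
    Finset.prod_nonneg fun e _ => (edgeVal_mem hW x e).1
  have h2 : ∏ e ∈ s, edgeVal W x e ≤ 1 :=
    Finset.prod_le_one (fun e _ => (edgeVal_mem hW x e).1) fun e _ => (edgeVal_mem hW x e).2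
  have h3 : (0:ℝ) ≤ ∏ e ∈ t, (1 - edgeVal W x e) :=
    Finset.prod_nonneg fun e _ => by linarith [(edgeVal_mem hW x e).2]
  have h4 : ∏ e ∈ t, (1 - edgeVal W x e) ≤ 1 :=
    Finset.prod_le_one (fun e _ => by linarith [(edgeVal_mem hW x e).2])
      fun e _ => by linarith [(edgeVal_mem hW x e).1]
  rw [Real.norm_eq_abs, abs_of_nonneg (mul_nonneg h1 h3)]
  exact mul_le_one₀ h2 h3 h4

lemma homDensitySet_expand {n : ℕ} {W : ℝ → ℝ → ℝ} (hW : IsGraphon W)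
    (G : SimpleGraph (Fin n)) [Fintype G.edgeSet] {s : Finset (Sym2 (Fin n))}
    (hs : s ⊆ G.edgeFinset) :
    homDensitySet s W = ∑ T ∈ (G.edgeFinset \ s).powerset, sampleProb G W (s ∪ T) := by
  unfold homDensitySet sampleProb prodEdges
  rw [← integral_finset_sum _ (fun T _ => integrable_prodForm hW _ _)]
  refine integral_congr_ae (ae_of_all _ fun x => ?_)
  dsimp only
  have hsplit : ∀ T ∈ (G.edgeFinset \ s).powerset,
      (∏ e ∈ s ∪ T, edgeVal W x e) * ∏ e ∈ G.edgeFinset \ (s ∪ T), (1 - edgeVal W x e)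
      = (∏ e ∈ s, edgeVal W x e) *
        ((∏ e ∈ T, edgeVal W x e) * ∏ e ∈ (G.edgeFinset \ s) \ T, (1 - edgeVal W x e)) := by
    intro T hT
    rw [Finset.mem_powerset] at hT
    have hdisj : Disjoint s T := by
      refine Finset.disjoint_left.2 fun e hes heT => ?_
      exact (Finset.mem_sdiff.1 (hT heT)).2 hes
    have hset : G.edgeFinset \ (s ∪ T) = (G.edgeFinset \ s) \ T := by
      ext e; simp only [Finset.mem_sdiff, Finset.mem_union]; tauto
    rw [Finset.prod_union hdisj, hset]; ring
  rw [Finset.sum_congr rfl hsplit, ← Finset.mul_sum, ← Finset.prod_add]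
  have : ∀ e ∈ G.edgeFinset \ s, edgeVal W x e + (1 - edgeVal W x e) = 1 := by
    intro e _; ring
  rw [Finset.prod_congr rfl this, Finset.prod_const_one, mul_one]

lemma binom_sum (m k : ℕ) (hk : k ≤ m) (p : ℝ) :
    ∑ j ∈ Finset.range (m+1),
        (j.choose k : ℝ) * ((m.choose j : ℝ) * p ^ j * (1-p) ^ (m-j))
      = (m.choose k : ℝ) * p ^ k := by
  rw [Finset.range_eq_Ico, ← Finset.sum_Ico_consecutive _ (Nat.zero_le k)
    (by omega : k ≤ m+1)]
  have h0 : ∑ j ∈ Finset.Ico 0 k,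
      (j.choose k : ℝ) * ((m.choose j : ℝ) * p ^ j * (1-p) ^ (m-j)) = 0 := by
    refine Finset.sum_eq_zero fun j hj => ?_
    rw [Finset.mem_Ico] at hj
    rw [Nat.choose_eq_zero_of_lt hj.2]; simp
  rw [h0, zero_add, Finset.sum_Ico_eq_sum_range]
  have hmk : m + 1 - k = (m - k) + 1 := by omega
  rw [hmk]
  have hterm : ∀ i ∈ Finset.range (m - k + 1),
      ((k+i).choose k : ℝ) * ((m.choose (k+i) : ℝ) * p ^ (k+i) * (1-p) ^ (m-(k+i)))
      = (m.choose k : ℝ) * p ^ k *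
          (p ^ i * (1-p) ^ (m-k-i) * ((m-k).choose i : ℝ)) := by
    intro i hi
    rw [Finset.mem_range] at hi
    have h1 := Nat.choose_mul (n := m) (show k ≤ k+i by omega)
    rw [Nat.add_sub_cancel_left] at h1
    have h2 : ((m.choose (k+i)) : ℝ) * ((k+i).choose k : ℝ)
        = (m.choose k : ℝ) * ((m-k).choose i : ℝ) := by exact_mod_cast h1
    have h3 : m - (k+i) = m - k - i := by omega
    rw [h3, pow_add]
    linear_combination p ^ k * p ^ i * (1-p) ^ (m-k-i) * h2
  rw [Finset.sum_congr rfl hterm, ← Finset.mul_sum]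
  have hadd : ∑ i ∈ Finset.range (m-k+1),
      p ^ i * (1-p) ^ (m-k-i) * ((m-k).choose i : ℝ) = (p + (1-p)) ^ (m-k) :=
    (add_pow p (1-p) (m-k)).symm
  rw [hadd]
  norm_num

/-- if `G` contains a `4`-cycle and `ℕ(G, W) = B(m, p)`, then
`E[t(G_k, W)] = p^k` for all `1 ≤ k ≤ m`. -/
theorem stmt3 {n : ℕ} (G : SimpleGraph (Fin n)) [Fintype G.edgeSet]
    (W : ℝ → ℝ → ℝ) (hW : IsGraphon W) (p : ℝ) (hp : p ∈ Set.Icc (0 : ℝ) 1)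
    (hC4 : ContainsC4 G)
    (hN : ∀ j, edgeCountDist G W j =
      (G.edgeFinset.card.choose j : ℝ) * p ^ j * (1 - p) ^ (G.edgeFinset.card - j)) :
    ∀ k, 1 ≤ k → k ≤ G.edgeFinset.card → avgSubDensity G W k = p ^ k := by

  intro k _hk1 hk2
  classical
  set E := G.edgeFinset with hE
  set m := E.card with hmdef
  have hexp : ∀ s ∈ E.powerset.filter (fun s => s.card = k),
      homDensitySet s W = ∑ F ∈ E.powerset.filter (fun F => s ⊆ F), sampleProb G W F := by
    intro s hs
    obtain ⟨hs1, _⟩ := Finset.mem_filter.1 hs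
    rw [Finset.mem_powerset] at hs1
    rw [homDensitySet_expand hW G hs1]
    refine Finset.sum_nbij' (fun T => s ∪ T) (fun F => F \ s) ?_ ?_ ?_ ?_ ?_
    · intro T hT
      rw [Finset.mem_powerset] at hT
      rw [Finset.mem_filter, Finset.mem_powerset]
      exact ⟨Finset.union_subset hs1 (hT.trans Finset.sdiff_subset),
        Finset.subset_union_left⟩
    · intro F hF
      rw [Finset.mem_filter, Finset.mem_powerset] at hF
      rw [Finset.mem_powerset]
      exact Finset.sdiff_subset_sdiff hF.1 (Finset.Subset.refl s)
    · intro T hT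
      rw [Finset.mem_powerset] at hT
      have hdisj : Disjoint s T := Finset.disjoint_left.2 fun e hes heT =>
        (Finset.mem_sdiff.1 (hT heT)).2 hes
      show (s ∪ T) \ s = T
      rw [Finset.union_sdiff_cancel_left hdisj]
    · intro F hF
      show s ∪ F \ s = F
      exact Finset.union_sdiff_of_subset (Finset.mem_filter.1 hF).2
    · intro T _; rfl
  have hswap : ∑ s ∈ E.powerset.filter (fun s => s.card = k),
        ∑ F ∈ E.powerset.filter (fun F => s ⊆ F), sampleProb G W F
      = ∑ F ∈ E.powerset,
          ∑ s ∈ (E.powerset.filter (fun s => s.card = k)).filter (fun s => s ⊆ F),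
            sampleProb G W F :=
    Finset.sum_comm' (fun s F => by
      simp only [Finset.mem_filter, Finset.mem_powerset]; tauto)
  have hcount : ∀ F ∈ E.powerset,
      ∑ s ∈ (E.powerset.filter (fun s => s.card = k)).filter (fun s => s ⊆ F),
        sampleProb G W F = (F.card.choose k : ℝ) * sampleProb G W F := by
    intro F hF
    rw [Finset.mem_powerset] at hF
    have hset : (E.powerset.filter (fun s => s.card = k)).filter (fun s => s ⊆ F)
        = F.powersetCard k := by
      ext s
      simp only [Finset.mem_filter, Finset.mem_powerset, Finset.mem_powersetCard]
      constructor
      · rintro ⟨⟨_, h2⟩, h3⟩; exact ⟨h3, h2⟩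
      · rintro ⟨h1, h2⟩; exact ⟨⟨h1.trans hF, h2⟩, h1⟩
    rw [hset, Finset.sum_const, Finset.card_powersetCard, nsmul_eq_mul]
  have hgroup : ∑ F ∈ E.powerset, (F.card.choose k : ℝ) * sampleProb G W F
      = ∑ j ∈ Finset.range (m+1), (j.choose k : ℝ) * edgeCountDist G W j := by
    rw [Finset.sum_powerset]
    refine Finset.sum_congr rfl fun j hj => ?_
    rw [edgeCountDist, ← hE, ← Finset.powersetCard_eq_filter, Finset.mul_sum]
    exact Finset.sum_congr rfl fun F hF => by
      rw [(Finset.mem_powersetCard.1 hF).2]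
  have hA : ∑ s ∈ E.powerset.filter (fun s => s.card = k), homDensitySet s W
      = (m.choose k : ℝ) * p ^ k := by
    rw [Finset.sum_congr rfl hexp, hswap, Finset.sum_congr rfl hcount, hgroup,
      Finset.sum_congr rfl (fun j _ => by rw [hN j]), binom_sum m k hk2 p]
  rw [avgSubDensity, ← hE, ← hmdef, hA, inv_mul_cancel_left₀
    (Nat.cast_ne_zero.2 (Nat.choose_pos hk2).ne')]
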